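/- (Liu–Talwar, utility and runtime) Let M be a mechanism from D^n to probability distributions on pairs (o,v) ∈ R_o × ℝ, let γ ∈ (0,1), and define A_{LT,γ}(d) as the distribution of the best-value sample among K independent draws from M(d), where K is independent with Pr[K = k] = γ(1−γ)^{k−1} for k ≥ 1. Then E[K] = 1/γ, and for any m ∈ ℝ and β ∈ (0,1] with Pr[val(M(d)) ≥ m] ≥ β, Pr[val(A_{LT,γ}(d)) < m] ≤ γ(1−β)/(β + γ(1−β)) ≤ γ/β. In particular, Pr[val(A_{LT,γ}(d)) ≥ Median(val(M(d)))] ≥ 1 − γ, and if q is such that Pr[val(M(d)) ≥ q] ≥ 1/K' for K' > 1, then Pr[val(A_{LT,γ}(d)) ≥ q] ≥ 1 − K'γ. -/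

import Mathlib

open MeasureTheory
open scoped ENNReal

/-- The median of the value (second coordinate) of a distribution on pairs `(o, v)`:
`Median(val(μ)) = sup {z : Pr_{(o,v) ∼ μ}[v ≥ z] ≥ 1/2}`. -/
noncomputable def medianVal {Ro : Type*} [MeasurableSpace Ro]
    (μ : Measure (Ro × ℝ)) : ℝ :=
  sSup {z : ℝ | (1 : ℝ≥0∞) / 2 ≤ μ {p | z ≤ p.2}}

/-- The Liu–Talwar random-stopping mechanism `A_{LT,γ}` applied to a probability
distribution `μ` on pairs `(o, v)`: sample `K ≥ 1` with `Pr[K = k] = γ(1-γ)^{k-1}`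
(geometric with parameter `γ`), draw `K` independent samples from `μ`, and output a sample
of maximal value, as chosen by the selector family `b`. -/
noncomputable def liuTalwar {Ro : Type*} [MeasurableSpace Ro] (γ : ℝ)
    (b : ∀ k : ℕ, (Fin k → Ro × ℝ) → Ro × ℝ)
    (μ : Measure (Ro × ℝ)) [IsProbabilityMeasure μ] : Measure (Ro × ℝ) :=
  Measure.sum fun k : ℕ =>
    ENNReal.ofReal (γ * (1 - γ) ^ k) •
      (Measure.pi fun _ : Fin (k + 1) => μ).map (b (k + 1))

/- ### Auxiliary lemmas -/

section Aux

variable {Ro : Type*} [MeasurableSpace Ro] {γ : ℝ}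
  {b : ∀ k : ℕ, (Fin k → Ro × ℝ) → Ro × ℝ}
  {μ : Measure (Ro × ℝ)} [IsProbabilityMeasure μ]

lemma stmt16_median_half (μ : Measure (Ro × ℝ))
    [IsProbabilityMeasure μ] : (1:ℝ≥0∞)/2 ≤ μ {p | medianVal μ ≤ p.2} := by
  set S := {z : ℝ | (1 : ℝ≥0∞) / 2 ≤ μ {p | z ≤ p.2}} with hSdef
  have hms : ∀ c : ℝ, MeasurableSet {p : Ro × ℝ | c ≤ p.2} :=
    fun c => measurable_snd measurableSet_Ici
  have hmono : ∀ {z z' : ℝ}, z' ≤ z → μ {p | z ≤ p.2} ≤ μ {p | z' ≤ p.2} :=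
    fun h => measure_mono (fun p hp => le_trans h hp)
  -- S nonempty
  have hne : S.Nonempty := by
    have hU : (⋃ n : ℕ, {p : Ro × ℝ | -(n:ℝ) ≤ p.2}) = Set.univ := by
      ext p
      simp only [Set.mem_iUnion, Set.mem_univ, iff_true, Set.mem_setOf_eq]
      obtain ⟨n, hn⟩ := exists_nat_ge (-p.2)
      exact ⟨n, by linarith⟩
    have hmonoA : Monotone (fun n : ℕ => {p : Ro × ℝ | -(n:ℝ) ≤ p.2}) := by
      intro a c hac p hp
      simp only [Set.mem_setOf_eq] at hp ⊢
      have : (a:ℝ) ≤ c := by exact_mod_cast hac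
      linarith
    have ht := tendsto_measure_iUnion_atTop (μ := μ) hmonoA
    rw [hU, measure_univ] at ht
    have : ∀ᶠ n : ℕ in Filter.atTop, (1:ℝ≥0∞)/2 < μ {p : Ro × ℝ | -(n:ℝ) ≤ p.2} :=
      ht.eventually_const_lt (by norm_num)
    obtain ⟨n, hn⟩ := this.exists
    exact ⟨-(n:ℝ), le_of_lt hn⟩
  -- S bounded above
  have hbdd : BddAbove S := by
    have hAnti : Antitone (fun n : ℕ => {p : Ro × ℝ | (n:ℝ) ≤ p.2}) := by
      intro a c hac p hp
      simp only [Set.mem_setOf_eq] at hp ⊢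
      have : (a:ℝ) ≤ c := by exact_mod_cast hac
      linarith
    have hI : (⋂ n : ℕ, {p : Ro × ℝ | (n:ℝ) ≤ p.2}) = ∅ := by
      ext p
      simp only [Set.mem_iInter, Set.mem_empty_iff_false, iff_false, Set.mem_setOf_eq, not_forall]
      obtain ⟨n, hn⟩ := exists_nat_gt p.2
      exact ⟨n, by push_neg; linarith⟩
    have ht := tendsto_measure_iInter_atTop (μ := μ)
      (fun n => (hms _).nullMeasurableSet) hAnti ⟨0, measure_ne_top μ _⟩
    rw [hI, measure_empty] at ht
    have : ∀ᶠ n : ℕ in Filter.atTop, μ {p : Ro × ℝ | (n:ℝ) ≤ p.2} < (1:ℝ≥0∞)/2 :=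
      ht.eventually_lt_const (by norm_num)
    obtain ⟨n, hn⟩ := this.exists
    refine ⟨(n:ℝ), fun z hz => ?_⟩
    by_contra hc
    push_neg at hc
    exact absurd (le_trans hz (hmono (le_of_lt hc))) (not_le.2 hn)
  -- main
  set s := medianVal μ with hs
  have hseq : {p : Ro × ℝ | s ≤ p.2} = ⋂ n : ℕ, {p : Ro × ℝ | s - 1/((n:ℝ)+1) ≤ p.2} := by
    ext p
    simp only [Set.mem_iInter, Set.mem_setOf_eq]
    constructor
    · intro h n
      have : (0:ℝ) < 1/((n:ℝ)+1) := by positivity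
      linarith
    · intro h
      by_contra hc
      push_neg at hc
      obtain ⟨n, hn⟩ := exists_nat_one_div_lt (show (0:ℝ) < s - p.2 by linarith)
      have := h n
      linarith
  have hAnti2 : Antitone (fun n : ℕ => {p : Ro × ℝ | s - 1/((n:ℝ)+1) ≤ p.2}) := by
    intro a c hac p hp
    simp only [Set.mem_setOf_eq] at hp ⊢
    have hac' : (a:ℝ) ≤ c := by exact_mod_cast hac
    have : 1/((c:ℝ)+1) ≤ 1/((a:ℝ)+1) := by
      apply one_div_le_one_div_of_le <;> linarith
    linarith
  have ht := tendsto_measure_iInter_atTop (μ := μ)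
    (fun n => (hms _).nullMeasurableSet) hAnti2 ⟨0, measure_ne_top μ _⟩
  rw [← hseq] at ht
  refine ge_of_tendsto ht (Filter.Eventually.of_forall fun n => ?_)
  have hlt : s - 1/((n:ℝ)+1) < s := by
    have : (0:ℝ) < 1/((n:ℝ)+1) := by positivity
    linarith
  obtain ⟨z, hzS, hz⟩ := exists_lt_of_lt_csSup hne hlt
  exact le_trans hzS (hmono (le_of_lt hz))

lemma stmt16_liuTalwar_apply {s : Set (Ro × ℝ)} (hs : MeasurableSet s) :
    liuTalwar γ b μ s =
      ∑' k : ℕ, ENNReal.ofReal (γ * (1 - γ) ^ k) *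
        (Measure.pi fun _ : Fin (k + 1) => μ).map (b (k + 1)) s := by
  rw [liuTalwar, Measure.sum_apply _ hs]
  simp [Measure.smul_apply, smul_eq_mul]

lemma stmt16_geom_sum_one (h0 : 0 < γ) (h1 : γ < 1) :
    ∑' k : ℕ, ENNReal.ofReal (γ * (1 - γ) ^ k) = 1 := by
  rw [← ENNReal.ofReal_tsum_of_nonneg (fun k => mul_nonneg h0.le (pow_nonneg (by linarith) k))
    ((summable_geometric_of_lt_one (by linarith) (by linarith)).mul_left γ)]
  rw [tsum_mul_left, tsum_geometric_of_lt_one (by linarith) (by linarith)]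
  rw [show γ * (1 - (1 - γ))⁻¹ = 1 by rw [sub_sub_cancel, mul_inv_cancel₀ h0.ne']]
  exact ENNReal.ofReal_one

lemma stmt16_map_lt_apply (hb : ∀ k, Measurable (b k))
    (hbmem : ∀ k, 0 < k → ∀ y : Fin k → Ro × ℝ, b k y ∈ Set.range y)
    (hbmax : ∀ k (y : Fin k → Ro × ℝ) (i : Fin k), (y i).2 ≤ (b k y).2)
    (k : ℕ) (m : ℝ) :
    (Measure.pi fun _ : Fin (k + 1) => μ).map (b (k + 1)) {p | p.2 < m} =
      (μ {p | p.2 < m}) ^ (k + 1) := by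
  have hsm : MeasurableSet {p : Ro × ℝ | p.2 < m} := measurable_snd measurableSet_Iio
  rw [Measure.map_apply (hb (k+1)) hsm]
  have hpre : b (k+1) ⁻¹' {p | p.2 < m} =
      Set.pi Set.univ (fun _ : Fin (k+1) => {p : Ro × ℝ | p.2 < m}) := by
    ext y
    simp only [Set.mem_preimage, Set.mem_setOf_eq, Set.mem_pi, Set.mem_univ, true_implies]
    constructor
    · intro h i
      exact lt_of_le_of_lt (hbmax (k+1) y i) h
    · intro h
      obtain ⟨i, hi⟩ := hbmem (k+1) (Nat.succ_pos k) y
      rw [← hi]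
      exact h i
  rw [hpre, Measure.pi_pi]
  simp [Finset.prod_const]

lemma stmt16_liuTalwar_univ (h0 : 0 < γ) (h1 : γ < 1) (hb : ∀ k, Measurable (b k)) :
    liuTalwar γ b μ Set.univ = 1 := by
  rw [stmt16_liuTalwar_apply MeasurableSet.univ]
  have : ∀ k : ℕ, (Measure.pi fun _ : Fin (k + 1) => μ).map (b (k + 1)) Set.univ = 1 := by
    intro k
    rw [Measure.map_apply (hb (k+1)) MeasurableSet.univ]
    simp
  simp_rw [this, mul_one]
  exact stmt16_geom_sum_one h0 h1

lemma stmt16_lt_bound (h0 : 0 < γ) (h1 : γ < 1) (hb : ∀ k, Measurable (b k))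
    (hbmem : ∀ k, 0 < k → ∀ y : Fin k → Ro × ℝ, b k y ∈ Set.range y)
    (hbmax : ∀ k (y : Fin k → Ro × ℝ) (i : Fin k), (y i).2 ≤ (b k y).2)
    (m β : ℝ) (hβ0 : 0 < β) (hβ1 : β ≤ 1) (hβ : ENNReal.ofReal β ≤ μ {p | m ≤ p.2}) :
    liuTalwar γ b μ {p | p.2 < m} ≤ ENNReal.ofReal (γ * (1 - β) / (β + γ * (1 - β))) := by
  have hα : μ {p | p.2 < m} ≤ ENNReal.ofReal (1 - β) := by
    have hcs : {p : Ro × ℝ | p.2 < m} = {p : Ro × ℝ | m ≤ p.2}ᶜ := by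
      ext p; simp [not_le]
    rw [hcs, measure_compl (s := {p : Ro × ℝ | m ≤ p.2}) (measurable_snd measurableSet_Ici) (measure_ne_top μ _), measure_univ,
      ENNReal.ofReal_sub _ hβ0.le, ENNReal.ofReal_one]
    exact tsub_le_tsub_left hβ 1
  rw [stmt16_liuTalwar_apply (s := {p : Ro × ℝ | p.2 < m}) (measurable_snd measurableSet_Iio)]
  simp_rw [stmt16_map_lt_apply hb hbmem hbmax]
  have hr0 : (0:ℝ) ≤ (1 - γ) * (1 - β) := by nlinarith
  have hr1 : (1 - γ) * (1 - β) < 1 := by nlinarith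
  have hfun : ∀ k : ℕ, γ * (1 - γ) ^ k * (1 - β) ^ (k + 1) =
      γ * (1 - β) * ((1 - γ) * (1 - β)) ^ k := fun k => by
    rw [mul_pow, pow_succ]; ring
  have hnn : ∀ k : ℕ, 0 ≤ γ * (1 - γ) ^ k * (1 - β) ^ (k + 1) := fun k =>
    mul_nonneg (mul_nonneg h0.le (pow_nonneg (by linarith) k)) (pow_nonneg (by linarith) _)
  have hsum : Summable (fun k : ℕ => γ * (1 - γ) ^ k * (1 - β) ^ (k + 1)) := by
    have := (summable_geometric_of_lt_one hr0 hr1).mul_left (γ * (1 - β))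
    exact this.congr fun k => (hfun k).symm
  calc ∑' k : ℕ, ENNReal.ofReal (γ * (1 - γ) ^ k) * μ {p | p.2 < m} ^ (k + 1)
      ≤ ∑' k : ℕ, ENNReal.ofReal (γ * (1 - γ) ^ k) * (ENNReal.ofReal (1 - β)) ^ (k + 1) :=
        ENNReal.tsum_le_tsum fun k => mul_le_mul_right (pow_le_pow_left' hα _) _
    _ = ∑' k : ℕ, ENNReal.ofReal (γ * (1 - γ) ^ k * (1 - β) ^ (k + 1)) := by
        refine tsum_congr fun k => ?_
        rw [← ENNReal.ofReal_pow (by linarith),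
          ← ENNReal.ofReal_mul (mul_nonneg h0.le (pow_nonneg (by linarith) k))]
    _ = ENNReal.ofReal (∑' k : ℕ, γ * (1 - γ) ^ k * (1 - β) ^ (k + 1)) :=
        (ENNReal.ofReal_tsum_of_nonneg hnn hsum).symm
    _ = ENNReal.ofReal (γ * (1 - β) / (β + γ * (1 - β))) := by
        congr 1
        rw [tsum_congr hfun, tsum_mul_left, tsum_geometric_of_lt_one hr0 hr1,
          div_eq_mul_inv]
        congr 1
        ring

lemma stmt16_compl_bound {X : Type*} [MeasurableSpace X] (ν : Measure X)
    (huniv : ν Set.univ = 1) {s : Set X} (hs : MeasurableSet s) {c t : ℝ}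
    (hc : 0 ≤ c) (hct : c ≤ t) (hνs : ν s ≤ ENNReal.ofReal c) :
    ENNReal.ofReal (1 - t) ≤ ν sᶜ := by
  have hfin : ν s ≠ ∞ := by
    refine ne_top_of_le_ne_top ?_ (measure_mono (Set.subset_univ s))
    rw [huniv]; exact ENNReal.one_ne_top
  rw [measure_compl hs hfin, huniv]
  calc ENNReal.ofReal (1 - t) ≤ ENNReal.ofReal (1 - c) :=
        ENNReal.ofReal_le_ofReal (by linarith)
    _ = 1 - ENNReal.ofReal c := by rw [ENNReal.ofReal_sub _ hc, ENNReal.ofReal_one]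
    _ ≤ 1 - ν s := tsub_le_tsub_left hνs 1

end Aux

/-- Liu–Talwar, utility and runtime: Theorem 4.2, utility/runtime parts.
The geometric number of repetitions `K` has `E[K] = 1/γ`; if `Pr[val(M(d)) ≥ m] ≥ β` then
`Pr[val(A_{LT,γ}(d)) < m] ≤ γ(1-β)/(β+γ(1-β))`; in particular
`Pr[val(A_{LT,γ}(d)) ≥ Median(val(M(d)))] ≥ 1-γ`, and if `Pr[val(M(d)) ≥ q] ≥ 1/K'` with
`K' > 1` then `Pr[val(A_{LT,γ}(d)) ≥ q] ≥ 1 - K'γ`. -/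
theorem stmt_16 {D Ro : Type*} [MeasurableSpace Ro] {n : ℕ}
    (M : (Fin n → D) → Measure (Ro × ℝ)) [∀ d, IsProbabilityMeasure (M d)]
    (d : Fin n → D) (γ : ℝ) (hγ : γ ∈ Set.Ioo (0 : ℝ) 1)
    (b : ∀ k : ℕ, (Fin k → Ro × ℝ) → Ro × ℝ)
    (hb : ∀ k, Measurable (b k))
    (hbmem : ∀ k, 0 < k → ∀ y : Fin k → Ro × ℝ, b k y ∈ Set.range y)
    (hbmax : ∀ k (y : Fin k → Ro × ℝ) (i : Fin k), (y i).2 ≤ (b k y).2) :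
    (∑' k : ℕ, γ * (1 - γ) ^ k * ((k : ℝ) + 1)) = 1 / γ ∧
    (∀ m β : ℝ, 0 < β → β ≤ 1 → ENNReal.ofReal β ≤ M d {p | m ≤ p.2} →
      liuTalwar γ b (M d) {p | p.2 < m} ≤
        ENNReal.ofReal (γ * (1 - β) / (β + γ * (1 - β))) ∧
      γ * (1 - β) / (β + γ * (1 - β)) ≤ γ / β) ∧
    ENNReal.ofReal (1 - γ) ≤ liuTalwar γ b (M d) {p | medianVal (M d) ≤ p.2} ∧
    (∀ K' q : ℝ, 1 < K' → ENNReal.ofReal (1 / K') ≤ M d {p | q ≤ p.2} →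
      ENNReal.ofReal (1 - K' * γ) ≤ liuTalwar γ b (M d) {p | q ≤ p.2}) := by
  obtain ⟨h0, h1⟩ := hγ
  have huniv : liuTalwar γ b (M d) Set.univ = 1 := stmt16_liuTalwar_univ h0 h1 hb
  have hcompl : ∀ m : ℝ, {p : Ro × ℝ | m ≤ p.2} = {p : Ro × ℝ | p.2 < m}ᶜ := by
    intro m; ext p; simp [not_lt]
  have hdiv : ∀ β : ℝ, 0 < β → β ≤ 1 →
      γ * (1 - β) / (β + γ * (1 - β)) ≤ γ / β := by
    intro β hβ0 hβ1
    apply div_le_div₀ h0.le (by nlinarith) hβ0 (by nlinarith)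
  refine ⟨?_, fun m β hβ0 hβ1 hβ =>
    ⟨stmt16_lt_bound h0 h1 hb hbmem hbmax m β hβ0 hβ1 hβ, hdiv β hβ0 hβ1⟩, ?_, ?_⟩
  · -- expectation of K
    have hr0 : (0:ℝ) ≤ 1 - γ := by linarith
    have hr1 : ‖(1 - γ : ℝ)‖ < 1 := by rw [Real.norm_eq_abs, abs_of_nonneg hr0]; linarith
    have hs1 : Summable (fun k : ℕ => (k:ℝ) * (1-γ)^k) := by
      have := summable_pow_mul_geometric_of_norm_lt_one 1 hr1
      simpa using this
    have hs2 : Summable (fun k : ℕ => (1-γ:ℝ)^k) := summable_geometric_of_norm_lt_one hr1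
    have h1' : (∑' k : ℕ, (k:ℝ) * (1-γ)^k) = (1-γ) / (1 - (1-γ))^2 :=
      tsum_coe_mul_geometric_of_norm_lt_one hr1
    have h2' : (∑' k : ℕ, (1-γ:ℝ)^k) = 1 / (1 - (1-γ)) := by
      rw [tsum_geometric_of_lt_one hr0 (by linarith), one_div]
    calc (∑' k : ℕ, γ * (1 - γ) ^ k * ((k : ℝ) + 1))
        = γ * ∑' k : ℕ, ((k:ℝ) * (1-γ)^k + (1-γ)^k) := by
          rw [← tsum_mul_left]; congr 1; ext k; ring
      _ = γ * ((1-γ) / (1 - (1-γ))^2 + 1 / (1 - (1-γ))) := by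
          rw [Summable.tsum_add hs1 hs2, h1', h2']
      _ = 1 / γ := by
          field_simp
          rw [sub_sub_cancel, div_eq_one_iff_eq (by positivity)]; ring
  · -- median
    set m := medianVal (M d)
    have hmed : ENNReal.ofReal (1/2 : ℝ) ≤ M d {p | m ≤ p.2} := by
      have := stmt16_median_half (M d)
      refine le_trans (le_of_eq ?_) this
      rw [ENNReal.ofReal_div_of_pos (by norm_num)]
      norm_num
    have hbound := stmt16_lt_bound h0 h1 hb hbmem hbmax m (1/2) (by norm_num)
      (by norm_num) hmed
    rw [hcompl m]
    refine stmt16_compl_bound _ huniv (measurable_snd measurableSet_Iio) ?_ ?_ hbound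
    · positivity
    · rw [div_le_iff₀ (by nlinarith)]
      nlinarith
  · -- K'
    intro K' q hK' hq
    have hβ0 : (0:ℝ) < 1 / K' := by positivity
    have hβ1 : (1:ℝ) / K' ≤ 1 := by
      rw [div_le_one (by linarith)]; linarith
    have hbound := stmt16_lt_bound h0 h1 hb hbmem hbmax q (1/K') hβ0 hβ1 hq
    rw [hcompl q]
    have hnn1 : (0:ℝ) ≤ 1 - 1/K' := by
      have : 1/K' ≤ 1 := hβ1
      linarith
    refine stmt16_compl_bound _ huniv (measurable_snd measurableSet_Iio) ?_ ?_ hbound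
    · exact div_nonneg (mul_nonneg h0.le hnn1)
        (add_nonneg hβ0.le (mul_nonneg h0.le hnn1))
    · calc γ * (1 - 1/K') / (1/K' + γ * (1 - 1/K')) ≤ γ / (1/K') :=
            hdiv (1/K') hβ0 hβ1
        _ = K' * γ := by field_simp
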